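/- Let γ > 0 and suppose ξ ∈ ℂ with |ξ| > 1 and |arg ξ| < γπ/4. Set w = 1 - ξ^{-1/γ} (principal branch). Then there is a constant c > 0 depending only on γ such that |1 - w| ≤ c (1 - |w|), i.e., w lies in a Stolz domain with vertex at 1. -/

import Mathlib

/-- Stolz-domain lemma: for `γ > 0` there is `c > 0` (depending only on `γ`) such that
for every `ξ ∈ ℂ` with `|ξ| > 1` and `|arg ξ| < γπ/4`, the point
`w = 1 - ξ^{-1/γ}` (principal branch) satisfies `|1 - w| ≤ c (1 - |w|)`. -/
theorem stolz_domain (γ : ℝ) (hγ : 0 < γ) :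
    ∃ c : ℝ, 0 < c ∧ ∀ ξ : ℂ, 1 < ‖ξ‖ → |Complex.arg ξ| < γ * Real.pi / 4 →
      ‖(1 : ℂ) - (1 - ξ ^ (((-1 / γ : ℝ)) : ℂ))‖ ≤
        c * (1 - ‖(1 : ℂ) - ξ ^ (((-1 / γ : ℝ)) : ℂ)‖) := by
  refine ⟨5, by norm_num, fun ξ hξ harg => ?_⟩
  have hξ0 : ξ ≠ 0 := by
    intro h; rw [h, norm_zero] at hξ; linarith
  set z : ℂ := ξ ^ (((-1 / γ : ℝ)) : ℂ) with hz
  have habs : (1 : ℝ) < ‖ξ‖ := by exact hξ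
  have habs0 : (0 : ℝ) < ‖ξ‖ := by linarith
  have hr : ‖z‖ = ‖ξ‖ ^ (-1 / γ) := by
    rw [hz, Complex.norm_cpow_of_ne_zero hξ0]
    simp
  have hrpos : 0 < ‖z‖ := by rw [hr]; exact Real.rpow_pos_of_pos habs0 _
  have hrlt : ‖z‖ < 1 := by
    rw [hr]
    exact Real.rpow_lt_one_of_one_lt_of_neg habs (by rw [neg_div, neg_lt_zero]; positivity)
  have hzdef : z = Complex.exp ((((-1 / γ : ℝ)) : ℂ) * Complex.log ξ) := by
    rw [hz, Complex.cpow_def_of_ne_zero hξ0, mul_comm]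
  have hre : z.re = ‖z‖ * Real.cos ((-1 / γ) * Complex.arg ξ) := by
    conv_lhs => rw [hzdef]
    rw [Complex.exp_re, hr, Real.rpow_def_of_pos habs0]
    simp [Complex.mul_re, Complex.mul_im, Complex.log_re, Complex.log_im]
    ring_nf
    exact Or.inl trivial
  have hcos : Real.sqrt 2 / 2 ≤ Real.cos ((-1 / γ) * Complex.arg ξ) := by
    rw [← Real.cos_abs, ← Real.cos_pi_div_four]
    apply Real.cos_le_cos_of_nonneg_of_le_pi (abs_nonneg _)
    · linarith [Real.pi_pos]
    · rw [abs_mul, abs_div, abs_neg, abs_one, abs_of_pos hγ]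
      rw [div_mul_eq_mul_div, one_mul, div_le_iff₀ hγ]
      calc |Complex.arg ξ| ≤ γ * Real.pi / 4 := le_of_lt harg
        _ = Real.pi / 4 * γ := by ring
  have hrez : Real.sqrt 2 / 2 * ‖z‖ ≤ z.re := by
    rw [hre]
    have := mul_le_mul_of_nonneg_left hcos (le_of_lt hrpos)
    linarith
  have hr2 : ‖z‖ ^ 2 = z.re ^ 2 + z.im ^ 2 := by
    rw [Complex.sq_norm, Complex.normSq_apply]; ring
  have hs2 : ‖(1 : ℂ) - z‖ ^ 2 = 1 - 2 * z.re + ‖z‖ ^ 2 := by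
    rw [Complex.sq_norm, Complex.normSq_apply, hr2]
    simp [Complex.sub_re, Complex.sub_im]
    ring
  have h1z : (1 : ℂ) - (1 - z) = z := by ring
  rw [h1z]
  have hsnn : 0 ≤ ‖(1 : ℂ) - z‖ := norm_nonneg _
  have hsqrt2 : Real.sqrt 2 ^ 2 = 2 := Real.sq_sqrt (by norm_num)
  have hsqrt2' : (1.41 : ℝ) ≤ Real.sqrt 2 := by
    nlinarith [Real.sqrt_nonneg 2]
  nlinarith [hs2, hrez, hrpos, hrlt, hsnn, sq_nonneg (1 - ‖z‖/5 - ‖(1:ℂ) - z‖),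
    sq_nonneg (‖z‖)]
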